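/- Abstract interpolation from a two-parameter family of inequalities: suppose nonnegative reals 𝒳, 𝒪, 𝒴 and positive constants M, ρ, c, C with 2C ≥ c satisfy, for every h > 0, the inequality 4hM e^{−c/(2h)} 𝒳 + e^{(2C−c)/h} 𝒪 ≥ ρ 𝒴. Then there exists a constant K, depending only on M, ρ, c (and not on C), such that 𝒴 ≤ K 𝒪^δ 𝒳^{1−δ} with δ = c/(4C − c), provided also 𝒴 ≤ 𝒳. -/

import Mathlib

set_option maxHeartbeats 1000000 in
/-- Abstract interpolation from a two-parameter family of inequalities:
if nonnegative reals `𝒳, 𝒪, 𝒴` and positive constants `M, ρ, c, C` with `2C ≥ c` satisfy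
`4hM e^{−c/(2h)} 𝒳 + e^{(2C−c)/h} 𝒪 ≥ ρ 𝒴` for every `h > 0`, then there is a constant
`K` depending only on `M, ρ, c` (not on `C`) with `𝒴 ≤ K 𝒪^δ 𝒳^{1−δ}`, `δ = c/(4C−c)`,
provided also `𝒴 ≤ 𝒳`. -/
theorem abstract_interpolation_optimization
    (M ρ c : ℝ) (hM : 0 < M) (hρ : 0 < ρ) (hc : 0 < c) :
    ∃ K : ℝ, 0 < K ∧
      ∀ C : ℝ, c ≤ 2 * C →
        ∀ X O Y : ℝ, 0 ≤ X → 0 ≤ O → 0 ≤ Y →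
          (∀ h : ℝ, 0 < h →
            ρ * Y ≤ 4 * h * M * Real.exp (-c / (2 * h)) * X
              + Real.exp ((2 * C - c) / h) * O) →
          Y ≤ X →
          Y ≤ K * O ^ (c / (4 * C - c)) * X ^ (1 - c / (4 * C - c)) := by
  refine ⟨Real.exp (c^2/4) + (8*M/c + 1)/ρ + 1, by positivity, ?_⟩
  set K := Real.exp (c^2/4) + (8*M/c + 1)/ρ + 1 with hKdef
  have hKpos : 0 < K := by positivity
  have hK1 : (1:ℝ) ≤ K := by
    have h1 : 0 < Real.exp (c^2/4) := Real.exp_pos _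
    have h2 : 0 ≤ (8*M/c + 1)/ρ := by positivity
    simp only [hKdef]; linarith
  clear_value K
  intro C hC X O Y hX hO hY hineq hYX
  set δ := c / (4*C - c) with hδdef
  have h4C : 0 < 4*C - c := by nlinarith
  have hδpos : 0 < δ := div_pos hc h4C
  have hδle : δ ≤ 1 := by rw [hδdef, div_le_one h4C]; linarith
  clear_value δ
  rcases eq_or_lt_of_le hO with hO0 | hOpos
  · -- O = 0 case: Y = 0
    have hY0 : Y = 0 := by
      by_contra hne
      have hYpos : 0 < Y := lt_of_le_of_ne hY (Ne.symm hne)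
      have key : ∀ h : ℝ, 0 < h → ρ * Y ≤ 4 * h * M * X := by
        intro h hh
        have h1 := hineq h hh
        have he : Real.exp (-c / (2*h)) ≤ 1 := by
          rw [Real.exp_le_one_iff]
          apply div_nonpos_of_nonpos_of_nonneg <;> nlinarith
        have hepos : 0 < Real.exp (-c / (2*h)) := Real.exp_pos _
        rw [← hO0] at h1
        nlinarith [mul_le_mul_of_nonneg_left he (by positivity : (0:ℝ) ≤ 4*h*M),
          mul_nonneg (mul_nonneg (by positivity : (0:ℝ) ≤ 4*h*M) hepos.le) hX]
      rcases eq_or_lt_of_le hX with hX0 | hXpos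
      · have := key 1 one_pos
        rw [← hX0] at this
        nlinarith
      · have h1 := key (ρ*Y/(8*M*X)) (by positivity)
        have h2 : 4 * (ρ*Y/(8*M*X)) * M * X = ρ*Y/2 := by
          field_simp
          ring
        rw [h2] at h1
        nlinarith [mul_pos hρ hYpos]
    rw [hY0, ← hO0, Real.zero_rpow hδpos.ne']
    positivity
  · -- O > 0
    have hXOprod : 0 ≤ O ^ δ * X ^ (1-δ) := by positivity
    rcases le_or_gt X O with hXO | hOX
    · -- X ≤ O
      rcases eq_or_lt_of_le hX with hX0 | hXpos
      · have hY0 : Y = 0 := le_antisymm (by rw [← hX0] at hYX; exact hYX) hY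
        rw [hY0]; positivity
      · have hXsplit : X = X ^ δ * X ^ (1-δ) := by
          rw [← Real.rpow_add hXpos]; ring_nf; exact (Real.rpow_one X).symm
        have h1 : X ^ δ ≤ O ^ δ := Real.rpow_le_rpow hX hXO hδpos.le
        have h2 : Y ≤ O ^ δ * X ^ (1-δ) := by
          calc Y ≤ X := hYX
            _ = X ^ δ * X ^ (1-δ) := hXsplit
            _ ≤ O ^ δ * X ^ (1-δ) := by
                apply mul_le_mul_of_nonneg_right h1 (by positivity)
        calc Y ≤ O ^ δ * X ^ (1-δ) := h2
          _ ≤ K * (O ^ δ * X ^ (1-δ)) := le_mul_of_one_le_left hXOprod hK1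
          _ = K * O ^ δ * X ^ (1-δ) := by ring
    · -- O < X
      have hXpos : 0 < X := lt_trans hOpos hOX
      set L := Real.log (X / O) with hLdef
      have hLpos : 0 < L := Real.log_pos (by rw [lt_div_iff₀ hOpos]; linarith)
      have hXOpos : 0 < X / O := div_pos hXpos hOpos
      have key : ∀ s : ℝ, Real.exp (s * L) = (X/O) ^ s := by
        intro s
        rw [Real.rpow_def_of_pos hXOpos, mul_comm]
      clear_value L
      have f1 : (X/O) ^ (-δ) * X = O ^ δ * X ^ (1-δ) := by
        rw [Real.div_rpow hX hOpos.le, Real.rpow_neg hX, Real.rpow_neg hOpos.le,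
          show (1-δ) = -δ + 1 by ring, Real.rpow_add hXpos, Real.rpow_one,
          Real.rpow_neg hX]
        field_simp
      have f2 : (X/O) ^ (1-δ) * O = O ^ δ * X ^ (1-δ) := by
        have hsplit : O ^ (1-δ) * O ^ δ = O := by
          rw [← Real.rpow_add hOpos]; ring_nf; exact Real.rpow_one O
        have hOdiv : O / O ^ (1-δ) = O ^ δ := by
          rw [div_eq_iff (Real.rpow_pos_of_pos hOpos (1-δ)).ne']
          linear_combination -hsplit
        rw [Real.div_rpow hX hOpos.le, div_mul_eq_mul_div, mul_div_assoc, hOdiv]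
        ring
      rcases le_or_gt L (c*(4*C-c)/4) with hLsmall | hLbig
      · -- small L : Y ≤ X ≤ exp(c²/4) O^δ X^{1-δ}
        have hfac : (X/O) ^ δ ≤ Real.exp (c^2/4) := by
          rw [← key]
          apply Real.exp_le_exp.mpr
          have heq : δ * (c*(4*C-c)/4) = c^2/4 := by
            rw [hδdef]; field_simp
          nlinarith [mul_le_mul_of_nonneg_left hLsmall hδpos.le]
        have hXeq : X = (X/O) ^ δ * (O ^ δ * X ^ (1-δ)) := by
          rw [Real.div_rpow hX hOpos.le,
            show (1-δ) = -δ + 1 by ring, Real.rpow_add hXpos, Real.rpow_one,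
            Real.rpow_neg hX]
          field_simp
        calc Y ≤ X := hYX
          _ = (X/O) ^ δ * (O ^ δ * X ^ (1-δ)) := hXeq
          _ ≤ Real.exp (c^2/4) * (O ^ δ * X ^ (1-δ)) :=
              mul_le_mul_of_nonneg_right hfac hXOprod
          _ ≤ K * (O ^ δ * X ^ (1-δ)) := by
              apply mul_le_mul_of_nonneg_right _ hXOprod
              have : 0 ≤ (8*M/c + 1)/ρ := by positivity
              simp only [hKdef]; linarith
          _ = K * O ^ δ * X ^ (1-δ) := by ring
      · -- big L : use the hypothesis at h = (4C-c)/(2L)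
        have hhpos : 0 < (4*C-c)/(2*L) := by positivity
        have hmain := hineq ((4*C-c)/(2*L)) hhpos
        have e1 : Real.exp (-c / (2 * ((4*C-c)/(2*L)))) = (X/O) ^ (-δ) := by
          rw [← key]
          congr 1
          rw [hδdef]
          field_simp
        have e2 : Real.exp ((2*C - c) / ((4*C-c)/(2*L))) = (X/O) ^ (1-δ) := by
          rw [← key]
          congr 1
          rw [hδdef]
          rw [one_sub_div h4C.ne', div_div_eq_mul_div]
          ring
        rw [e1, e2] at hmain
        have hmain2 : ρ * Y ≤ 4 * ((4*C-c)/(2*L)) * M * (O ^ δ * X ^ (1-δ))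
            + O ^ δ * X ^ (1-δ) := by
          calc ρ * Y ≤ 4 * ((4*C-c)/(2*L)) * M * ((X/O) ^ (-δ)) * X + (X/O) ^ (1-δ) * O :=
              hmain
            _ = 4 * ((4*C-c)/(2*L)) * M * ((X/O) ^ (-δ) * X) + (X/O) ^ (1-δ) * O := by ring
            _ = 4 * ((4*C-c)/(2*L)) * M * (O ^ δ * X ^ (1-δ)) + O ^ δ * X ^ (1-δ) := by
                rw [f1, f2]
        have hht : (4*C-c)/(2*L) ≤ 2/c := by
          rw [div_le_div_iff₀ (by positivity) hc]
          linarith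
        have hb : 4 * ((4*C-c)/(2*L)) * M ≤ 8*M/c := by
          have h3 := mul_le_mul_of_nonneg_left hht (by positivity : (0:ℝ) ≤ 4*M)
          calc 4 * ((4*C-c)/(2*L)) * M = 4*M * ((4*C-c)/(2*L)) := by ring
            _ ≤ 4*M * (2/c) := h3
            _ = 8*M/c := by ring
        have hmain3 : ρ * Y ≤ (8*M/c + 1) * (O ^ δ * X ^ (1-δ)) := by
          calc ρ * Y ≤ 4 * ((4*C-c)/(2*L)) * M * (O ^ δ * X ^ (1-δ))
              + O ^ δ * X ^ (1-δ) := hmain2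
            _ ≤ 8*M/c * (O ^ δ * X ^ (1-δ)) + O ^ δ * X ^ (1-δ) :=
                add_le_add_left (mul_le_mul_of_nonneg_right hb hXOprod) _
            _ = (8*M/c + 1) * (O ^ δ * X ^ (1-δ)) := by ring
        have hYcoeff : Y ≤ (8*M/c + 1)/ρ * (O ^ δ * X ^ (1-δ)) := by
          rw [div_mul_eq_mul_div, le_div_iff₀ hρ]
          linarith [hmain3]
        calc Y ≤ (8*M/c + 1)/ρ * (O ^ δ * X ^ (1-δ)) := hYcoeff
          _ ≤ K * (O ^ δ * X ^ (1-δ)) := by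
              apply mul_le_mul_of_nonneg_right _ hXOprod
              have := Real.exp_pos (c^2/4)
              simp only [hKdef]; linarith
          _ = K * O ^ δ * X ^ (1-δ) := by ring
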